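/- Occurrence lemma: (i) if Ψ ⊢ A ≤ τ for a monotype τ, then τ does not occur inside an arrow in A; (ii) if Ψ ⊢ τ ≤ B for a monotype τ, then τ does not occur inside an arrow in B. Here 'τ occurs inside an arrow in B' means there exist B1, B2 such that B1→B2 is a subterm of B and τ is a subterm of B1 or of B2. -/
import Mathlib


set_option autoImplicit true

namespace DK

/-- Types: 1 | α | A → B | ∀α. A  (type variables named by naturals) -/
inductive Ty : Type where
  | unit : Ty
  | var : ℕ → Ty
  | arr : Ty → Ty → Ty
  | all : ℕ → Ty → Ty

/-- Monotypes: types containing no quantifiers. -/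
def Ty.mono : Ty → Prop
  | .unit => True
  | .var _ => True
  | .arr A B => A.mono ∧ B.mono
  | .all _ _ => False

/-- Free type variables. -/
def Ty.fv : Ty → Finset ℕ
  | .unit => ∅
  | .var a => {a}
  | .arr A B => A.fv ∪ B.fv
  | .all a A => A.fv.erase a

/-- `A.subst τ a` is the substitution [τ/a]A. -/
def Ty.subst : Ty → Ty → ℕ → Ty
  | .unit, _, _ => .unit
  | .var b, τ, a => if b = a then τ else .var b
  | .arr A B, τ, a => .arr (A.subst τ a) (B.subst τ a)
  | .all b A, τ, a => .all b (if b = a then A else A.subst τ a)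

/-- Declarative context entries: type variables α and term variable typings x : A. -/
inductive Decl : Type where
  | tvar : ℕ → Decl
  | var : ℕ → Ty → Decl

/-- Declarative contexts; the most recent declaration is the head
    (so "Ψ, α" is `Decl.tvar α :: Ψ`). -/
abbrev Ctx := List Decl

/-- Well-formedness Ψ ⊢ A : every free type variable of A is declared in Ψ. -/
def WfTy (Ψ : Ctx) (A : Ty) : Prop :=
  ∀ a ∈ A.fv, Decl.tvar a ∈ Ψ

/-- Declarative subtyping Ψ ⊢ A ≤ B. -/
inductive Sub : Ctx → Ty → Ty → Prop where
  | var : Decl.tvar a ∈ Ψ → Sub Ψ (.var a) (.var a)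
  | unit : Sub Ψ .unit .unit
  | arr : Sub Ψ B₁ A₁ → Sub Ψ A₂ B₂ → Sub Ψ (.arr A₁ A₂) (.arr B₁ B₂)
  | allL : (τ : Ty) → τ.mono → WfTy Ψ τ → Sub Ψ (A.subst τ a) B → Sub Ψ (.all a A) B
  | allR : Sub (Decl.tvar b :: Ψ) A B → Sub Ψ A (.all b B)

end DK

namespace DK

/-- Subterm occurrence: A ⊑ B iff A is a subterm of B. -/
inductive Subterm : Ty → Ty → Prop where
  | refl : Subterm A A
  | arrL : Subterm A B₁ → Subterm A (.arr B₁ B₂)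
  | arrR : Subterm A B₂ → Subterm A (.arr B₁ B₂)
  | all : Subterm A B → Subterm A (.all b B)

/-- τ occurs inside an arrow in B: there are B₁, B₂ with B₁→B₂ a subterm of B and
    τ a subterm of B₁ or of B₂. -/
def OccursInArrow (τ B : Ty) : Prop :=
  ∃ B₁ B₂, Subterm (.arr B₁ B₂) B ∧ (Subterm τ B₁ ∨ Subterm τ B₂)

/-- Number of arrows in a type. -/
def narr : Ty → ℕ
  | .unit => 0
  | .var _ => 0
  | .arr A B => narr A + narr B + 1
  | .all _ A => narr A

theorem narr_subterm {C D : Ty} (h : Subterm C D) : narr C ≤ narr D := by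
  induction h with
  | refl => exact le_refl _
  | arrL _ ih => simp [narr]; omega
  | arrR _ ih => simp [narr]; omega
  | all _ ih => simpa [narr] using ih

theorem narr_subst (A τ : Ty) (a : ℕ) : narr A ≤ narr (A.subst τ a) := by
  induction A with
  | unit => simp [Ty.subst]
  | var b => by_cases h : b = a <;> simp [Ty.subst, h, narr]
  | arr A B ihA ihB => simp [Ty.subst, narr]; omega
  | all b A ih =>
    by_cases h : b = a <;> simp [Ty.subst, h, narr]
    exact ih

theorem narr_sub {Ψ : Ctx} {A B : Ty} (h : Sub Ψ A B) :
    (B.mono → narr A ≤ narr B) ∧ (A.mono → narr B ≤ narr A) := by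
  induction h with
  | var _ => exact ⟨fun _ => le_refl _, fun _ => le_refl _⟩
  | unit => exact ⟨fun _ => le_refl _, fun _ => le_refl _⟩
  | arr h1 h2 ih1 ih2 =>
    constructor
    · rintro ⟨m1, m2⟩
      have := ih1.2 m1
      have := ih2.1 m2
      simp [narr]; omega
    · rintro ⟨m1, m2⟩
      have := ih1.1 m1
      have := ih2.2 m2
      simp [narr]; omega
  | allL τ' _ _ _ ih =>
    refine ⟨fun hB => ?_, fun hA => hA.elim⟩
    simp only [narr]
    exact le_trans (narr_subst _ τ' _) (ih.1 hB)
  | allR _ ih =>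
    exact ⟨fun hB => hB.elim, fun hA => (ih.2 hA).trans (le_refl _)⟩

/-- Occurrence lemma: (i) if Ψ ⊢ A ≤ τ then τ does not occur inside an arrow in A;
    (ii) if Ψ ⊢ τ ≤ B then τ does not occur inside an arrow in B. -/
theorem occurrence (Ψ : Ctx) (τ : Ty) (hmono : τ.mono) :
    (∀ A, Sub Ψ A τ → ¬ OccursInArrow τ A) ∧
    (∀ B, Sub Ψ τ B → ¬ OccursInArrow τ B) := by
  constructor
  · rintro A hsub ⟨B₁, B₂, harr, hor⟩
    have h1 : narr A ≤ narr τ := (narr_sub hsub).1 hmono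
    have h2 : narr (Ty.arr B₁ B₂) ≤ narr A := narr_subterm harr
    have h3 : narr τ ≤ narr B₁ ∨ narr τ ≤ narr B₂ :=
      hor.imp narr_subterm narr_subterm
    simp [narr] at h2
    omega
  · rintro B hsub ⟨B₁, B₂, harr, hor⟩
    have h1 : narr B ≤ narr τ := (narr_sub hsub).2 hmono
    have h2 : narr (Ty.arr B₁ B₂) ≤ narr B := narr_subterm harr
    have h3 : narr τ ≤ narr B₁ ∨ narr τ ≤ narr B₂ :=
      hor.imp narr_subterm narr_subterm
    simp [narr] at h2
    omega


end DK
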